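/- Let r ≥ 0 be a natural number and b_1,…,b_{r+2} ∈ ℂ. Consider the polynomial V in the variables x_1,…,x_r defined as the determinant of the (2r+2)×(2r+2) matrix whose first r+2 rows are (1, b_i, …, b_i^{2r+1}) for i = 1,…,r+2 and whose last r rows are (1, x_l, x_l², …, x_l^{2r+1}) for l = 1,…,r (a Vandermonde determinant in the 2r+2 nodes b_1,…,b_{r+2}, x_1,…,x_r). Then the determinant of the confluent Vandermonde matrix M(b) equals the mixed partial derivative ∂^r V/∂x_1⋯∂x_r evaluated at x_1 = b_1, …, x_r = b_r. -/

import Mathlib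

open Matrix Finset MvPolynomial

/-- The confluent Vandermonde matrix: a `(2r+2) × (2r+2)` matrix whose first `r+2` rows
are the Vandermonde rows `(1, bᵢ, bᵢ², …, bᵢ^{2r+1})` for `i = 0,…,r+1`, and whose last
`r` rows are the derivative rows `(0, 1, 2bᵢ, …, (2r+1)bᵢ^{2r})` for `i = 0,…,r-1`. -/
def confluentVandermonde (r : ℕ) (b : Fin (r + 2) → ℂ) :
    Matrix (Fin (2 * r + 2)) (Fin (2 * r + 2)) ℂ :=
  Matrix.of fun i j =>
    if h : (i : ℕ) < r + 2 then b ⟨i, h⟩ ^ (j : ℕ)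
    else ((j : ℕ) : ℂ) * b ⟨(i : ℕ) - (r + 2), by have := i.isLt; omega⟩ ^ ((j : ℕ) - 1)

/-- The Vandermonde determinant in the `2r+2` nodes `b₀, …, b_{r+1}, x₀, …, x_{r-1}`,
regarded as a polynomial in the variables `x₀, …, x_{r-1}`. -/
noncomputable def vandermondePoly (r : ℕ) (b : Fin (r + 2) → ℂ) :
    MvPolynomial (Fin r) ℂ :=
  Matrix.det (Matrix.of fun i j : Fin (2 * r + 2) =>
    if h : (i : ℕ) < r + 2 then MvPolynomial.C (b ⟨i, h⟩ ^ (j : ℕ))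
    else (MvPolynomial.X (⟨(i : ℕ) - (r + 2), by have := i.isLt; omega⟩ : Fin r)) ^ (j : ℕ))

section helpers
variable {r : ℕ}

lemma foldr_pderiv_sum {α : Type*} (L : List (Fin r)) (s : Finset α)
    (f : α → MvPolynomial (Fin r) ℂ) :
    L.foldr (fun l q => pderiv l q) (∑ x ∈ s, f x)
      = ∑ x ∈ s, L.foldr (fun l q => pderiv l q) (f x) := by
  induction L with
  | nil => simp
  | cons l L ih => simp [ih, map_sum]

lemma foldr_pderiv_C_mul (L : List (Fin r)) (a : ℂ) (p : MvPolynomial (Fin r) ℂ) :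
    L.foldr (fun l q => pderiv l q) (C a * p)
      = C a * L.foldr (fun l q => pderiv l q) p := by
  induction L with
  | nil => rfl
  | cons l L ih => simp [ih, pderiv_mul]

lemma pderiv_prod_zero {α : Type*} (l : Fin r) (s : Finset α)
    (f : α → MvPolynomial (Fin r) ℂ) (h : ∀ m ∈ s, pderiv l (f m) = 0) :
    pderiv l (∏ m ∈ s, f m) = 0 := by
  classical
  induction s using Finset.induction_on with
  | empty => simp
  | insert a s hm ih =>
    rw [Finset.prod_insert hm, pderiv_mul, h a (Finset.mem_insert_self a s),
      ih fun m hms => h m (Finset.mem_insert_of_mem hms)]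
    ring

lemma foldr_pderiv_prod_pow (e : Fin r → ℕ) (L : List (Fin r)) (hL : L.Nodup) :
    L.foldr (fun l q => pderiv l q) (∏ m : Fin r, X m ^ e m)
      = ∏ m : Fin r, if m ∈ L then C ((e m : ℂ)) * X m ^ (e m - 1) else X m ^ e m := by
  classical
  induction L with
  | nil => simp
  | cons l L ih =>
    have hnd := List.nodup_cons.mp hL
    rw [List.foldr_cons, ih hnd.2]
    set g : Fin r → MvPolynomial (Fin r) ℂ :=
      fun m => if m ∈ L then C ((e m : ℂ)) * X m ^ (e m - 1) else X m ^ e m with hg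
    have hgl : g l = X l ^ e l := by simp [hg, hnd.1]
    have hsplit : ∏ m : Fin r, g m = g l * ∏ m ∈ Finset.univ.erase l, g m :=
      (Finset.mul_prod_erase Finset.univ g (Finset.mem_univ l)).symm
    have hz : pderiv l (∏ m ∈ Finset.univ.erase l, g m) = 0 := by
      refine pderiv_prod_zero l _ _ fun m hm => ?_
      have hml : m ≠ l := Finset.ne_of_mem_erase hm
      simp [hg]
      split <;> simp [pderiv_mul, pderiv_pow, pderiv_X_of_ne hml]
    rw [hsplit, pderiv_mul, hz, mul_zero, add_zero, hgl]
    have hdl : pderiv l (X l ^ e l) = C ((e l : ℂ)) * X l ^ (e l - 1) := by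
      rw [pderiv_pow, pderiv_X_self, mul_one, ← map_natCast (C : ℂ →+* MvPolynomial (Fin r) ℂ) (e l)]
    rw [hdl]
    rw [← Finset.mul_prod_erase Finset.univ
      (fun m => if m ∈ l :: L then C ((e m : ℂ)) * X m ^ (e m - 1) else X m ^ e m)
      (Finset.mem_univ l)]
    simp only [List.mem_cons, true_or, if_true]
    congr 1
    refine Finset.prod_congr rfl fun m hm => ?_
    have hml : m ≠ l := Finset.ne_of_mem_erase hm
    simp [hg, hml]

end helpers

lemma prod_split {M : Type*} [CommMonoid M] (r : ℕ) (f : Fin (2 * r + 2) → M) :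
    ∏ i, f i = (∏ i : Fin (r + 2), f ⟨i, by omega⟩) * ∏ l : Fin r, f ⟨r + 2 + l, by omega⟩ := by
  rw [← Equiv.prod_comp ((finSumFinEquiv (m := r + 2) (n := r)).trans (finCongr (by omega))) f,
    Fintype.prod_sum_type]
  congr 1 <;> refine Finset.prod_congr rfl fun i _ => ?_ <;> congr 1 <;>
    exact Fin.ext (by simp)


/-- The determinant of the confluent Vandermonde matrix equals the mixed partial
derivative `∂^r V / ∂x₀ ⋯ ∂x_{r-1}` of the Vandermonde determinant `V` in the nodes
`b₀, …, b_{r+1}, x₀, …, x_{r-1}`, evaluated at `x₀ = b₀, …, x_{r-1} = b_{r-1}`. -/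
theorem confluentVandermonde_det_eq_mixed_partial (r : ℕ) (b : Fin (r + 2) → ℂ) :
    (confluentVandermonde r b).det =
      MvPolynomial.eval (fun l : Fin r => b (Fin.castLE (by omega) l))
        ((Finset.univ : Finset (Fin r)).toList.foldr
          (fun l q => MvPolynomial.pderiv l q) (vandermondePoly r b)) := by
  classical
  set b' : Fin r → ℂ := fun l => b (Fin.castLE (by omega) l) with hb'
  rw [vandermondePoly]
  conv_rhs => rw [Matrix.det_apply']
  rw [foldr_pderiv_sum, map_sum, Matrix.det_apply']
  refine Finset.sum_congr rfl fun σ _ => ?_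
  -- reindex products over σ⁻¹
  have hre1 : ∀ (M : Matrix (Fin (2*r+2)) (Fin (2*r+2)) ℂ),
      ∏ i, M (σ i) i = ∏ i, M i (σ⁻¹ i) := by
    intro M
    rw [← Equiv.prod_comp σ⁻¹ (fun i => M (σ i) i)]
    exact Finset.prod_congr rfl fun i _ => by simp
  have hre2 : ∀ (M : Matrix (Fin (2*r+2)) (Fin (2*r+2)) (MvPolynomial (Fin r) ℂ)),
      ∏ i, M (σ i) i = ∏ i, M i (σ⁻¹ i) := by
    intro M
    rw [← Equiv.prod_comp σ⁻¹ (fun i => M (σ i) i)]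
    exact Finset.prod_congr rfl fun i _ => by simp
  rw [hre1, hre2]
  set e : Fin r → ℕ := fun l => (σ⁻¹ ⟨r + 2 + l, by omega⟩ : ℕ) with he
  set c : ℂ := ∏ i : Fin (r + 2), b i ^ (σ⁻¹ ⟨i, by omega⟩ : ℕ) with hc
  have hA : ∏ i, (Matrix.of fun i j : Fin (2 * r + 2) =>
      if h : (i : ℕ) < r + 2 then MvPolynomial.C (b ⟨i, h⟩ ^ (j : ℕ))
      else (MvPolynomial.X (⟨(i : ℕ) - (r + 2), by have := i.isLt; omega⟩ : Fin r)) ^ (j : ℕ))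
        i (σ⁻¹ i) = C c * ∏ l : Fin r, X l ^ e l := by
    rw [prod_split]
    congr 1
    · rw [hc, map_prod]
      refine Finset.prod_congr rfl fun i _ => ?_
      rw [Matrix.of_apply, dif_pos (by simpa using i.isLt)]
    · refine Finset.prod_congr rfl fun l _ => ?_
      rw [Matrix.of_apply, dif_neg (Nat.not_lt.mpr (Nat.le_add_right (r+2) l.val))]
      congr 2
      exact Fin.ext (by simp)
  have hsign : ((Equiv.Perm.sign σ : ℤ) : MvPolynomial (Fin r) ℂ)
      = C (((Equiv.Perm.sign σ : ℤ) : ℂ)) := by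
    rw [map_intCast]
  rw [hA, hsign, ← mul_assoc, ← C_mul, foldr_pderiv_C_mul,
    foldr_pderiv_prod_pow e _ (Finset.univ.nodup_toList), _root_.map_mul, eval_C]
  have hifs : ∀ m : Fin r, (if m ∈ (Finset.univ : Finset (Fin r)).toList
      then C ((e m : ℂ)) * X m ^ (e m - 1) else X m ^ e m)
      = C ((e m : ℂ)) * X m ^ (e m - 1) := fun m => by
    simp [Finset.mem_toList]
  simp only [hifs]
  rw [map_prod]
  have heval : ∀ m : Fin r, eval b' (C ((e m : ℂ)) * X m ^ (e m - 1))
      = (e m : ℂ) * b' m ^ (e m - 1) := fun m => by simp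
  simp only [heval]
  have hCV : ∏ i, confluentVandermonde r b i (σ⁻¹ i)
      = c * ∏ m : Fin r, (e m : ℂ) * b' m ^ (e m - 1) := by
    rw [prod_split r (fun i => confluentVandermonde r b i (σ⁻¹ i))]
    congr 1
    · rw [hc]
      refine Finset.prod_congr rfl fun i _ => ?_
      rw [confluentVandermonde, Matrix.of_apply, dif_pos (by simpa using i.isLt)]
    · refine Finset.prod_congr rfl fun l _ => ?_
      rw [confluentVandermonde, Matrix.of_apply,
        dif_neg (Nat.not_lt.mpr (Nat.le_add_right (r+2) l.val))]
      congr 2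
      rw [hb']
      congr 1
      exact Fin.ext (by simp)
  rw [hCV]
  ring
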